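/- For z ∈ S^{2n-1}_{2p} with |z_n| < 1 and α(s) the integral curve of ξ̂ in Example 1, the vectors F₁(s) = α'(s) and F₂(s) = (α''(s) + α(s))/κ₁ with κ₁ = √(1/|z_n|² - 1) satisfy the circle equations ∇̂_{α'}F₁ = κ₁F₂, ∇̂_{α'}F₂ = -κ₁F₁, and the totally real condition ⟨iF₁(s), F₂(s)⟩ = 0. -/

import Mathlib

open ComplexConjugate

/-- Real part of the indefinite Hermitian form on ℂ^{n+1}_p ≅ (Fin (n-1) → ℂ) × ℂ × ℂ. -/
noncomputable def Gbig (p : ℕ) {m : ℕ} (v w : (Fin m → ℂ) × ℂ × ℂ) : ℝ :=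
  (∑ j : Fin m, (if (j : ℕ) < p then (-1 : ℝ) else 1) * (v.1 j * conj (w.1 j)).re)
    + (v.2.1 * conj w.2.1).re + (v.2.2 * conj w.2.2).re

/-- The analogous form on ℂⁿ_p ≅ (Fin (n-1) → ℂ) × ℂ. -/
noncomputable def Gsm (p : ℕ) {m : ℕ} (v w : (Fin m → ℂ) × ℂ) : ℝ :=
  (∑ j : Fin m, (if (j : ℕ) < p then (-1 : ℝ) else 1) * (v.1 j * conj (w.1 j)).re)
    + (v.2 * conj w.2).re

/-- For z = (w,z_n) ∈ S^{2n-1}_{2p} with 0 < |z_n| < 1 and the integral curve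
α(s) = (z₁,…,z_{n-1}, cos(t+s/|z_n|)z_n, sin(t+s/|z_n|)z_n) of ξ̂, the fields
F₁ = α' and F₂ = (α'' + α)/κ₁ with κ₁ = √(1/|z_n|² − 1) satisfy the circle equations
∇̂_{α'}F₁ = κ₁F₂ and ∇̂_{α'}F₂ = −κ₁F₁ (where ∇̂_{α'}Y = Y' + ⟨α',Y⟩α by the Gauss
formula of the hyperquadric), together with the totally real condition ⟨iF₁,F₂⟩ = 0. -/
theorem stmt15 (n p : ℕ) (hn : 3 ≤ n) (hp1 : 1 ≤ p) (hpn : p ≤ n - 2)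
    (w : Fin (n - 1) → ℂ) (zn : ℂ) (hzn : zn ≠ 0) (hzn1 : ‖zn‖ < 1)
    (hz : Gsm p (w, zn) (w, zn) = 1) (t : ℝ)
    (α : ℝ → (Fin (n - 1) → ℂ) × ℂ × ℂ)
    (hα : α = fun s => (w, ((Real.cos (t + s / ‖zn‖) : ℝ) : ℂ) * zn,
      ((Real.sin (t + s / ‖zn‖) : ℝ) : ℂ) * zn))
    (κ₁ : ℝ) (hκ₁ : κ₁ = Real.sqrt (1 / (‖zn‖) ^ 2 - 1))
    (F₁ F₂ : ℝ → (Fin (n - 1) → ℂ) × ℂ × ℂ)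
    (hF₁ : F₁ = deriv α)
    (hF₂ : F₂ = fun s => (1 / κ₁ : ℝ) • (deriv (deriv α) s + α s)) :
    ∀ s, deriv F₁ s + Gbig p (F₁ s) (F₁ s) • α s = κ₁ • F₂ s ∧
      deriv F₂ s + Gbig p (F₁ s) (F₂ s) • α s = -(κ₁ • F₁ s) ∧
      Gbig p (Complex.I • F₁ s) (F₂ s) = 0 := by
  set a := ‖zn‖ with ha_def
  have ha : (0:ℝ) < a := norm_pos_iff.mpr hzn
  have hane : a ≠ 0 := ha.ne'
  have ha2 : (0:ℝ) < 1 / a ^ 2 - 1 := by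
    have h1 : a ^ 2 < 1 := by nlinarith
    have h2 : (1:ℝ) < 1 / a ^ 2 := by
      rw [lt_div_iff₀ (by positivity)]; linarith
    linarith
  have hk2 : κ₁ ^ 2 = 1 / a ^ 2 - 1 := by
    rw [hκ₁]; exact Real.sq_sqrt ha2.le
  have hkpos : (0:ℝ) < κ₁ := by rw [hκ₁]; exact Real.sqrt_pos.mpr ha2
  have hkne : κ₁ ≠ 0 := hkpos.ne'
  have hk2' : κ₁ ^ 2 * a ^ 2 = 1 - a ^ 2 := by rw [hk2]; field_simp
  have hkC : ((κ₁:ℝ):ℂ) ^ 2 = 1 / ((a:ℝ):ℂ) ^ 2 - 1 := by exact_mod_cast hk2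
  -- real parts of products
  have hre : ∀ r r' : ℝ, ((r:ℂ) * zn * conj ((r':ℂ) * zn)).re = r * r' * a ^ 2 := by
    intro r r'
    have : (r:ℂ) * zn * conj ((r':ℂ) * zn) = ((r * r' * a ^ 2 : ℝ) : ℂ) := by
      rw [map_mul, Complex.conj_ofReal,
        show (r:ℂ) * zn * ((r':ℂ) * conj zn) = (r:ℂ)*(r':ℂ)*(zn * conj zn) by ring,
        Complex.mul_conj, ha_def, ← Complex.sq_norm]
      push_cast; ring
    rw [this, Complex.ofReal_re]
  have hreI : ∀ r r' : ℝ, (Complex.I * ((r:ℂ) * zn) * conj ((r':ℂ) * zn)).re = 0 := by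
    intro r r'
    have : Complex.I * ((r:ℂ) * zn) * conj ((r':ℂ) * zn)
        = Complex.I * ((r * r' * Complex.normSq zn : ℝ) : ℂ) := by
      rw [map_mul, Complex.conj_ofReal,
        show Complex.I * ((r:ℂ) * zn) * ((r':ℂ) * conj zn)
          = Complex.I * ((r:ℂ)*(r':ℂ)*(zn * conj zn)) by ring,
        Complex.mul_conj]
      push_cast; ring
    rw [this]
    simp [Complex.mul_re]
  -- derivative machinery
  have hθ : ∀ u : ℝ, HasDerivAt (fun s : ℝ => t + s / a) (1/a) u := fun u => by
    simpa using ((hasDerivAt_id u).div_const a).const_add t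
  have hc : ∀ u : ℝ, HasDerivAt (fun s : ℝ => Real.cos (t + s / a))
      (-Real.sin (t + u / a) * (1/a)) u := fun u =>
    (Real.hasDerivAt_cos _).comp u (hθ u)
  have hs : ∀ u : ℝ, HasDerivAt (fun s : ℝ => Real.sin (t + s / a))
      (Real.cos (t + u / a) * (1/a)) u := fun u =>
    (Real.hasDerivAt_sin _).comp u (hθ u)
  have key : ∀ (f : ℝ → ℝ) (f' u : ℝ), HasDerivAt f f' u →
      HasDerivAt (fun s => ((f s : ℝ) : ℂ) * zn) (((f' : ℝ) : ℂ) * zn) u :=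
    fun f f' u h => h.ofReal_comp.mul_const zn
  -- explicit first derivative
  have hA1 : deriv α = fun u => ((0 : Fin (n-1) → ℂ),
      ((-Real.sin (t + u / a) * (1/a) : ℝ) : ℂ) * zn,
      ((Real.cos (t + u / a) * (1/a) : ℝ) : ℂ) * zn) := by
    funext u
    rw [hα]
    exact ((hasDerivAt_const u w).prodMk
      ((key _ _ u (hc u)).prodMk (key _ _ u (hs u)))).deriv
  -- explicit second derivative
  have hA2 : deriv (deriv α) = fun u => ((0 : Fin (n-1) → ℂ),
      ((-(Real.cos (t + u / a) * (1/a)) * (1/a) : ℝ) : ℂ) * zn,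
      ((-Real.sin (t + u / a) * (1/a) * (1/a) : ℝ) : ℂ) * zn) := by
    rw [hA1]
    funext u
    have h1 : HasDerivAt (fun s : ℝ => -Real.sin (t + s / a) * (1/a))
        (-(Real.cos (t + u / a) * (1/a)) * (1/a)) u := ((hs u).neg).mul_const (1/a)
    have h2 : HasDerivAt (fun s : ℝ => Real.cos (t + s / a) * (1/a))
        ((-Real.sin (t + u / a) * (1/a)) * (1/a)) u := (hc u).mul_const (1/a)
    exact ((hasDerivAt_const u (0 : Fin (n-1) → ℂ)).prodMk
      ((key _ _ u h1).prodMk (key _ _ u h2))).deriv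
  -- generic scalar-combination lemma on ℂ
  have comb : ∀ (g r₁ r₂ r₃ : ℝ), g * (r₁ + r₂) = r₃ →
      (g : ℝ) • (((r₁:ℝ):ℂ) * zn + ((r₂:ℝ):ℂ) * zn) = ((r₃:ℝ):ℂ) * zn := by
    intro g r₁ r₂ r₃ h
    rw [Complex.real_smul, ← h]; push_cast; ring
  -- explicit F₂
  have hF₂' : F₂ = fun u => ((κ₁⁻¹ : ℝ) • w,
      ((-κ₁ * Real.cos (t + u / a) : ℝ) : ℂ) * zn,
      ((-κ₁ * Real.sin (t + u / a) : ℝ) : ℂ) * zn) := by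
    funext u
    rw [hF₂, hA2, hα]
    refine Prod.ext ?_ (Prod.ext ?_ ?_)
    · show (1/κ₁ : ℝ) • ((0 : Fin (n-1) → ℂ) + w) = (κ₁⁻¹ : ℝ) • w
      rw [zero_add, one_div]
    · show (1/κ₁ : ℝ) • (((-(Real.cos (t + u / a) * (1/a)) * (1/a) : ℝ) : ℂ) * zn
          + ((Real.cos (t + u / a) : ℝ) : ℂ) * zn)
        = ((-κ₁ * Real.cos (t + u / a) : ℝ) : ℂ) * zn
      apply comb
      set x := Real.cos (t + u / a)
      field_simp
      linear_combination x * hk2'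
    · show (1/κ₁ : ℝ) • (((-Real.sin (t + u / a) * (1/a) * (1/a) : ℝ) : ℂ) * zn
          + ((Real.sin (t + u / a) : ℝ) : ℂ) * zn)
        = ((-κ₁ * Real.sin (t + u / a) : ℝ) : ℂ) * zn
      apply comb
      set x := Real.sin (t + u / a)
      field_simp
      linear_combination x * hk2'
  -- explicit derivative of F₂
  have hF₂d : deriv F₂ = fun u => ((0 : Fin (n-1) → ℂ),
      ((-κ₁ * (-Real.sin (t + u / a) * (1/a)) : ℝ) : ℂ) * zn,
      ((-κ₁ * (Real.cos (t + u / a) * (1/a)) : ℝ) : ℂ) * zn) := by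
    rw [hF₂']
    funext u
    have h1 : HasDerivAt (fun s : ℝ => -κ₁ * Real.cos (t + s / a))
        (-κ₁ * (-Real.sin (t + u / a) * (1/a))) u := (hc u).const_mul (-κ₁)
    have h2 : HasDerivAt (fun s : ℝ => -κ₁ * Real.sin (t + s / a))
        (-κ₁ * (Real.cos (t + u / a) * (1/a))) u := (hs u).const_mul (-κ₁)
    exact ((hasDerivAt_const u ((κ₁⁻¹ : ℝ) • w)).prodMk
      ((key _ _ u h1).prodMk (key _ _ u h2))).deriv
  intro s
  set cs := Real.cos (t + s / a) with hcs
  set ss := Real.sin (t + s / a) with hss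
  have hsc : ss ^ 2 + cs ^ 2 = 1 := Real.sin_sq_add_cos_sq _
  -- Gbig values
  have hG11 : Gbig p (F₁ s) (F₁ s) = 1 := by
    rw [hF₁, hA1]
    simp only [Gbig, Pi.zero_apply, zero_mul, map_zero, mul_zero, Complex.zero_re,
      Finset.sum_const_zero, zero_add, hre]
    rw [← hcs, ← hss]
    field_simp
    linear_combination hsc
  have hG12 : Gbig p (F₁ s) (F₂ s) = 0 := by
    rw [hF₁, hA1, hF₂']
    simp only [Gbig, Pi.zero_apply, zero_mul, map_zero, mul_zero, Complex.zero_re,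
      Finset.sum_const_zero, zero_add, hre]
    rw [← hcs, ← hss]
    ring
  refine ⟨?_, ?_, ?_⟩
  · rw [hG11, hF₁, hA2, hF₂', hα, one_smul]
    refine Prod.ext ?_ (Prod.ext ?_ ?_)
    · show (0 : Fin (n-1) → ℂ) + w = κ₁ • ((κ₁⁻¹ : ℝ) • w)
      rw [zero_add, smul_smul, mul_inv_cancel₀ hkne, one_smul]
    · show ((-(cs * (1/a)) * (1/a) : ℝ) : ℂ) * zn + ((cs : ℝ) : ℂ) * zn
        = κ₁ • (((-κ₁ * cs : ℝ) : ℂ) * zn)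
      rw [Complex.real_smul]
      push_cast
      linear_combination ((cs:ℂ) * zn) * hkC
    · show ((-ss * (1/a) * (1/a) : ℝ) : ℂ) * zn + ((ss : ℝ) : ℂ) * zn
        = κ₁ • (((-κ₁ * ss : ℝ) : ℂ) * zn)
      rw [Complex.real_smul]
      push_cast
      linear_combination ((ss:ℂ) * zn) * hkC
  · rw [hG12, hF₂d, hF₁, hA1, zero_smul, add_zero]
    refine Prod.ext ?_ (Prod.ext ?_ ?_)
    · show (0 : Fin (n-1) → ℂ) = -(κ₁ • (0 : Fin (n-1) → ℂ))
      simp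
    · show ((-κ₁ * (-ss * (1/a)) : ℝ) : ℂ) * zn = -(κ₁ • (((-ss * (1/a) : ℝ) : ℂ) * zn))
      rw [Complex.real_smul]; push_cast; ring
    · show ((-κ₁ * (cs * (1/a)) : ℝ) : ℂ) * zn = -(κ₁ • (((cs * (1/a) : ℝ) : ℂ) * zn))
      rw [Complex.real_smul]; push_cast; ring
  · rw [hF₁, hA1, hF₂']
    simp only [Gbig, Prod.smul_fst, Prod.smul_snd, Pi.smul_apply, smul_zero, Pi.zero_apply,
      zero_mul, map_zero, mul_zero, Complex.zero_re, Finset.sum_const_zero, zero_add,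
      smul_eq_mul, hreI, add_zero]
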